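/- Let (A,M) be a local ring which is not a field, and E a nonzero A-module with M·E = 0. Let R := A ⋉ E be the trivial ring extension, let a be a nonzero element of M and e a nonzero element of E, and consider the polynomial F := (a,0) + (0,e)·X in R[X] (constant coefficient the image of a under the canonical inclusion A → R, linear coefficient the image of e under the canonical inclusion E → R). Then F is a Gaussian polynomial over R, but its content ideal c(F) is not a principal ideal of R; in particular R is not pseudo-arithmetical. -/

import Mathlib

/-- The content ideal `c(f)` of a polynomial: the ideal generated by its coefficients. -/
def contentIdeal {R : Type*} [CommRing R] (f : Polynomial R) : Ideal R :=
  Ideal.span (Set.range f.coeff)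

/-- A polynomial `f` is Gaussian if `c(f*g) = c(f)*c(g)` for every polynomial `g`. -/
def IsGaussianPoly {R : Type*} [CommRing R] (f : Polynomial R) : Prop :=
  ∀ g : Polynomial R, contentIdeal (f * g) = contentIdeal f * contentIdeal g

/-- A commutative ring is Gaussian if every polynomial over it is Gaussian. -/
def IsGaussianRing (R : Type*) [CommRing R] : Prop :=
  ∀ f : Polynomial R, IsGaussianPoly f

/-- A commutative ring is arithmetical if every finitely generated ideal is locally
principal: its extension to the localization at each maximal ideal is principal. -/
def IsArithmeticalRing (R : Type*) [CommRing R] : Prop :=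
  ∀ I : Ideal R, I.FG → ∀ P : Ideal R, ∀ hP : P.IsMaximal,
    haveI := hP.isPrime
    (I.map (algebraMap R (Localization P.primeCompl))).IsPrincipal

/-- A commutative ring is a Prüfer ring if every finitely generated ideal containing a
non-zero-divisor is invertible as a fractional ideal. -/
def IsPruferRing (R : Type*) [CommRing R] : Prop :=
  ∀ I : Ideal R, I.FG → (∃ r ∈ I, r ∈ nonZeroDivisors R) →
    IsUnit (I : FractionalIdeal (nonZeroDivisors R) (FractionRing R))

/-- An integral domain is a Prüfer domain if every nonzero finitely generated ideal is
invertible as a fractional ideal. -/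
def IsPruferDomain (A : Type*) [CommRing A] [IsDomain A] : Prop :=
  ∀ I : Ideal A, I.FG → I ≠ ⊥ →
    IsUnit (I : FractionalIdeal (nonZeroDivisors A) (FractionRing A))

/-- A commutative ring is a total ring of quotients if each of its elements is
either a unit or a zero-divisor. -/
def IsTotalRingOfQuotients (R : Type*) [CommRing R] : Prop :=
  ∀ r : R, IsUnit r ∨ r ∉ nonZeroDivisors R

/-- A commutative ring is pseudo-arithmetical if every Gaussian polynomial over it has
locally principal content ideal. -/
def IsPseudoArithmetical (R : Type*) [CommRing R] : Prop :=
  ∀ f : Polynomial R, IsGaussianPoly f → ∀ P : Ideal R, ∀ hP : P.IsMaximal,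
    haveI := hP.isPrime
    ((contentIdeal f).map (algebraMap R (Localization P.primeCompl))).IsPrincipal

/-- The ideal `0 ⋉ E` of the trivial ring extension `A ⋉ E`: the ideal of elements
with zero first component, i.e. the kernel of the projection `A ⋉ E → A`. -/
def zeroIdealTrivSqZeroExt (A E : Type*) [CommRing A] [AddCommGroup E] [Module A E]
    [Module Aᵐᵒᵖ E] [IsCentralScalar A E] : Ideal (TrivSqZeroExt A E) :=
  RingHom.ker (TrivSqZeroExt.fstHom A A E).toRingHom

open TrivSqZeroExt IsLocalRing
open Polynomial hiding contentIdeal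

open TrivSqZeroExt in
lemma contentIdeal_mul_le' {R : Type*} [CommRing R] (f g : Polynomial R) :
    contentIdeal (f * g) ≤ contentIdeal f * contentIdeal g := by
  rw [contentIdeal, Ideal.span_le]
  rintro _ ⟨n, rfl⟩
  rw [Polynomial.coeff_mul]
  exact Submodule.sum_mem _ fun p _ => Ideal.mul_mem_mul
    (Ideal.subset_span ⟨p.1, rfl⟩) (Ideal.subset_span ⟨p.2, rfl⟩)

lemma coeff_mem_contentIdeal' {R : Type*} [CommRing R] (f : Polynomial R) (n : ℕ) :
    f.coeff n ∈ contentIdeal f := Ideal.subset_span ⟨n, rfl⟩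

lemma isPrincipal_of_map_bijective' {R S : Type*} [CommRing R] [CommRing S]
    (f : R →+* S) (hf : Function.Bijective f) (I : Ideal R)
    (h : (I.map f).IsPrincipal) : I.IsPrincipal := by
  obtain ⟨y, hy⟩ := h
  let e : R ≃+* S := RingEquiv.ofBijective f hf
  have h1 : (I.map f).map (e.symm : S →+* R) = I := by
    rw [Ideal.map_map]
    have h2 : (e.symm : S →+* R).comp f = RingHom.id R := by
      ext x
      exact e.symm_apply_apply x
    rw [h2, Ideal.map_id]
  refine ⟨⟨e.symm y, ?_⟩⟩
  rw [← h1, hy, Ideal.submodule_span_eq, Ideal.map_span, Set.image_singleton,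
    Ideal.submodule_span_eq]
  rfl

/-- Let `(A,M)` be a local ring which is not a field and `E` a nonzero
`A`-module with `M • E = 0`. For `a ≠ 0` in `M` and `e ≠ 0` in `E`, the polynomial
`F := (a,0) + (0,e)·X` over `R := A ⋉ E` is Gaussian but its content ideal is not
principal; in particular `R` is not pseudo-arithmetical. -/
theorem gaussian_poly_content_not_principal (A E : Type*) [CommRing A] [IsLocalRing A]
    (hA : ¬ IsField A)
    [AddCommGroup E] [Module A E] [Module Aᵐᵒᵖ E] [IsCentralScalar A E] [Nontrivial E]
    (hME : ∀ m ∈ IsLocalRing.maximalIdeal A, ∀ x : E, m • x = 0)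
    (a : A) (haM : a ∈ IsLocalRing.maximalIdeal A) (ha : a ≠ 0)
    (e : E) (he : e ≠ 0) :
    IsGaussianPoly
        (Polynomial.C (TrivSqZeroExt.inl a) +
          Polynomial.C (TrivSqZeroExt.inr e) * Polynomial.X :
          Polynomial (TrivSqZeroExt A E)) ∧
      ¬ (contentIdeal
          (Polynomial.C (TrivSqZeroExt.inl a) +
            Polynomial.C (TrivSqZeroExt.inr e) * Polynomial.X :
            Polynomial (TrivSqZeroExt A E))).IsPrincipal ∧
      ¬ IsPseudoArithmetical (TrivSqZeroExt A E) := by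
  classical

  set F : Polynomial (TrivSqZeroExt A E) := Polynomial.C (TrivSqZeroExt.inl a) +
      Polynomial.C (TrivSqZeroExt.inr e) * Polynomial.X with hFdef
  -- coefficients of F
  have hF0 : F.coeff 0 = inl a := by simp [hFdef]
  have hF1 : F.coeff 1 = inr e := by simp [hFdef]
  have hF2 : ∀ n, F.coeff (n + 2) = 0 := by intro n; simp [hFdef, coeff_C]
  -- content of F
  have hcF : contentIdeal F = Ideal.span {(inl a : (TrivSqZeroExt A E)), inr e} := by
    apply le_antisymm
    · rw [contentIdeal, Ideal.span_le]
      rintro _ ⟨n, rfl⟩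
      match n with
      | 0 => exact hF0 ▸ Ideal.subset_span (Set.mem_insert _ _)
      | 1 => exact hF1 ▸ Ideal.subset_span (Set.mem_insert_of_mem _ rfl)
      | (n + 2) => rw [hF2 n]; exact Ideal.zero_mem _
    · rw [Ideal.span_le]
      rintro x hx
      rcases hx with rfl | rfl
      · exact hF0 ▸ coeff_mem_contentIdeal' F 0
      · exact hF1 ▸ coeff_mem_contentIdeal' F 1
  -- multiplication facts
  have hax : ∀ x : (TrivSqZeroExt A E), (inl a : (TrivSqZeroExt A E)) * x = inl (a * x.fst) := by
    intro x
    refine TrivSqZeroExt.ext (by simp [fst_mul]) ?_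
    show a • x.snd + MulOpposite.op x.fst • (0 : E) = (0 : E)
    rw [hME a haM x.snd, smul_zero, add_zero]
  have hex : ∀ x : (TrivSqZeroExt A E), (inr e : (TrivSqZeroExt A E)) * x = inr (x.fst • e) := by
    intro x
    refine TrivSqZeroExt.ext (by simp [fst_mul]) ?_
    show (0 : A) • x.snd + MulOpposite.op x.fst • e = x.fst • e
    rw [zero_smul, zero_add, op_smul_eq_smul]
  -- coefficients of F * g
  have hc0 : ∀ g : Polynomial (TrivSqZeroExt A E), (F * g).coeff 0 = inl a * g.coeff 0 := by
    intro g; rw [Polynomial.mul_coeff_zero, hF0]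
  have hcn : ∀ (g : Polynomial (TrivSqZeroExt A E)) (n : ℕ),
      (F * g).coeff (n + 1) = inl a * g.coeff (n + 1) + inr e * g.coeff n := by
    intro g n
    have h1 : F * g = Polynomial.C (inl a : (TrivSqZeroExt A E)) * g + Polynomial.C (inr e : (TrivSqZeroExt A E)) * (X * g) := by
      rw [hFdef]; ring
    rw [h1, Polynomial.coeff_add, Polynomial.coeff_C_mul, Polynomial.coeff_C_mul,
      Polynomial.coeff_X_mul]
  -- Gaussian
  have hGauss : IsGaussianPoly F := by
    intro g
    refine le_antisymm (contentIdeal_mul_le' F g) ?_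
    have key : ∀ n, (inl a : (TrivSqZeroExt A E)) * g.coeff n ∈ contentIdeal (F * g) ∧
        (inr e : (TrivSqZeroExt A E)) * g.coeff n ∈ contentIdeal (F * g) := by
      by_cases hall : ∀ n, (g.coeff n).fst ∈ maximalIdeal A
      · intro n
        constructor
        · match n with
          | 0 => exact hc0 g ▸ coeff_mem_contentIdeal' _ 0
          | (m + 1) =>
            have h1 : (inr e : (TrivSqZeroExt A E)) * g.coeff m = 0 := by
              rw [hex, hME _ (hall m) e, inr_zero]
            have h2 := hcn g m
            rw [h1, add_zero] at h2
            exact h2 ▸ coeff_mem_contentIdeal' _ (m + 1)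
        · rw [hex, hME _ (hall n) e, inr_zero]
          exact Ideal.zero_mem _
      · push_neg at hall
        have hjs : (g.coeff (Nat.find hall)).fst ∉ maximalIdeal A := Nat.find_spec hall
        have hstep : (F * g).coeff (Nat.find hall) = inl a * g.coeff (Nat.find hall) := by
          rcases hn : Nat.find hall with _ | m
          · exact hc0 g
          · have hm : (g.coeff m).fst ∈ maximalIdeal A := by
              have := Nat.find_min hall (m := m) (by omega)
              exact not_not.1 this
            rw [hcn g m, hex, hME _ hm e, inr_zero, add_zero]
        obtain ⟨u, hu⟩ : IsUnit (g.coeff (Nat.find hall)) :=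
          isUnit_iff_isUnit_fst.2 (IsLocalRing.notMem_maximalIdeal.1 hjs)
        have hinla : (inl a : (TrivSqZeroExt A E)) ∈ contentIdeal (F * g) := by
          have hmem : inl a * g.coeff (Nat.find hall) ∈ contentIdeal (F * g) :=
            hstep ▸ coeff_mem_contentIdeal' _ _
          have h3 := Ideal.mul_mem_right (↑u⁻¹ : (TrivSqZeroExt A E)) _ hmem
          rwa [mul_assoc, ← hu, u.mul_inv, mul_one] at h3
        intro n
        refine ⟨Ideal.mul_mem_right _ _ hinla, ?_⟩
        have h4 := coeff_mem_contentIdeal' (F * g) (n + 1)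
        rw [hcn g n] at h4
        have h5 : inl a * g.coeff (n + 1) ∈ contentIdeal (F * g) :=
          Ideal.mul_mem_right _ _ hinla
        have h6 := Ideal.sub_mem _ h4 h5
        simpa using h6
    rw [hcF, contentIdeal, Ideal.span_mul_span']
    rw [Ideal.span_le]
    rintro _ ⟨x, hx, _, ⟨n, rfl⟩, rfl⟩
    rcases hx with rfl | rfl
    · exact (key n).1
    · exact (key n).2
  -- not principal
  have hnp : ¬ (contentIdeal F).IsPrincipal := by
    rw [hcF]
    rintro ⟨t, ht⟩
    rw [Ideal.submodule_span_eq] at ht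
    have hta : (inl a : (TrivSqZeroExt A E)) ∈ Ideal.span {t} := ht ▸ Ideal.subset_span (Set.mem_insert _ _)
    have hte : (inr e : (TrivSqZeroExt A E)) ∈ Ideal.span {t} :=
      ht ▸ Ideal.subset_span (Set.mem_insert_of_mem _ rfl)
    have htm : t ∈ Ideal.span {(inl a : (TrivSqZeroExt A E)), inr e} := by
      rw [ht]; exact Ideal.subset_span rfl
    obtain ⟨r, s, hrs⟩ := Ideal.mem_span_pair.1 htm
    have htfst : t.fst ∈ maximalIdeal A := by
      rw [← hrs]
      simp only [fst_add, fst_mul, fst_inl, fst_inr, mul_zero, add_zero]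
      exact Ideal.mul_mem_left _ _ haM
    obtain ⟨α, hα⟩ := Ideal.mem_span_singleton'.1 hta
    obtain ⟨β, hβ⟩ := Ideal.mem_span_singleton'.1 hte
    have hβfst : β.fst * t.fst = 0 := by
      have := congrArg TrivSqZeroExt.fst hβ
      simpa [fst_mul] using this
    have hβsnd : β.fst • t.snd + MulOpposite.op t.fst • β.snd = e := by
      have := congrArg TrivSqZeroExt.snd hβ
      simpa [snd_mul] using this
    have hβunit : IsUnit β.fst := by
      by_contra hn
      have hβM : β.fst ∈ maximalIdeal A := hn
      rw [hME _ hβM t.snd, op_smul_eq_smul, hME _ htfst β.snd, add_zero] at hβsnd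
      exact he hβsnd.symm
    have htf0 : t.fst = 0 := by
      obtain ⟨v, hv⟩ := hβunit
      have := congrArg (fun z => (↑v⁻¹ : A) * z) hβfst
      simpa [← hv, ← mul_assoc] using this
    have hαfst : α.fst * t.fst = a := by
      have := congrArg TrivSqZeroExt.fst hα
      simpa [fst_mul] using this
    rw [htf0, mul_zero] at hαfst
    exact ha hαfst.symm
  -- (TrivSqZeroExt A E) is local
  haveI : Nontrivial (TrivSqZeroExt A E) :=
    ⟨⟨(0 : (TrivSqZeroExt A E)), 1, fun h => zero_ne_one (α := A) (by simpa using congrArg TrivSqZeroExt.fst h)⟩⟩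
  haveI hloc : IsLocalRing (TrivSqZeroExt A E) := by
    refine IsLocalRing.of_isUnit_or_isUnit_one_sub_self fun x => ?_
    rcases IsLocalRing.isUnit_or_isUnit_one_sub_self x.fst with h | h
    · exact Or.inl (isUnit_iff_isUnit_fst.2 h)
    · refine Or.inr (isUnit_iff_isUnit_fst.2 ?_)
      simpa [fst_sub] using h
  refine ⟨hGauss, hnp, ?_⟩
  intro hPA
  have hmax : (maximalIdeal (TrivSqZeroExt A E)).IsMaximal := IsLocalRing.maximalIdeal.isMaximal (TrivSqZeroExt A E)
  have hp := hPA F hGauss (maximalIdeal (TrivSqZeroExt A E)) hmax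
  apply hnp
  refine isPrincipal_of_map_bijective'
    (algebraMap (TrivSqZeroExt A E) (Localization (maximalIdeal (TrivSqZeroExt A E)).primeCompl)) ?_ _ hp
  have H : (maximalIdeal (TrivSqZeroExt A E)).primeCompl ≤ IsUnit.submonoid (TrivSqZeroExt A E) := fun x hx =>
    IsLocalRing.notMem_maximalIdeal.1 hx
  let eqv := IsLocalization.atUnits (TrivSqZeroExt A E) (maximalIdeal (TrivSqZeroExt A E)).primeCompl
    (S := Localization (maximalIdeal (TrivSqZeroExt A E)).primeCompl) H
  have hfun : ⇑(algebraMap (TrivSqZeroExt A E) (Localization (maximalIdeal (TrivSqZeroExt A E)).primeCompl)) = ⇑eqv := by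
    funext r
    rw [← eqv.commutes r]
    simp
  rw [hfun]
  exact eqv.bijective
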